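/- arXiv:1008.3571 — 2 statements merged into one kernel-verified Lean document; each statement's English description precedes it below -/
import Mathlib

section
/- Let d ≥ 2 and let H be the subspace of e ∈ L²(S^{d-1}; ℂ^d) with ξ·e(ξ) = 0 a.e. If E(x) = ∫_{|ξ|=1} e^{i x·ξ} e(ξ) dσ(ξ) with e ∈ H, then |E(0)| ≤ (((d-1)/d)·|S^{d-1}|)^{1/2} · ‖e‖_{L²(S^{d-1})}. -/
open MeasureTheory Metric
open scoped Pointwise ComplexConjugate ENNReal

/-- Surface measure on the unit sphere `S^{d-1} ⊂ ℝ^d`. -/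
noncomputable def sphereMeasure (d : ℕ) :
    Measure (sphere (0 : EuclideanSpace ℝ (Fin d)) 1) :=
  (volume : Measure (EuclideanSpace ℝ (Fin d))).toSphere

variable {d : ℕ}


lemma mem_sph (O : EuclideanSpace ℝ (Fin d) ≃ₗᵢ[ℝ] EuclideanSpace ℝ (Fin d))
    (ξ : sphere (0 : EuclideanSpace ℝ (Fin d)) 1) :
    O ξ ∈ sphere (0 : EuclideanSpace ℝ (Fin d)) 1 := by
  have h := ξ.2
  simp only [mem_sphere_iff_norm, sub_zero] at h ⊢
  simp [h]

/-- The homeomorphism of the unit sphere induced by a linear isometry equivalence. -/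
noncomputable def sphHomeo (O : EuclideanSpace ℝ (Fin d) ≃ₗᵢ[ℝ] EuclideanSpace ℝ (Fin d)) :
    sphere (0 : EuclideanSpace ℝ (Fin d)) 1 ≃ₜ sphere (0 : EuclideanSpace ℝ (Fin d)) 1 where
  toFun ξ := ⟨O ξ, mem_sph O ξ⟩
  invFun ξ := ⟨O.symm ξ, mem_sph O.symm ξ⟩
  left_inv ξ := by ext; simp
  right_inv ξ := by ext; simp
  continuous_toFun := Continuous.subtype_mk (O.continuous.comp continuous_subtype_val) _
  continuous_invFun := Continuous.subtype_mk (O.symm.continuous.comp continuous_subtype_val) _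

lemma sphHomeo_measurePreserving (O : EuclideanSpace ℝ (Fin d) ≃ₗᵢ[ℝ] EuclideanSpace ℝ (Fin d)) :
    MeasurePreserving (sphHomeo O) (sphereMeasure d) (sphereMeasure d) := by
  refine ⟨(sphHomeo O).continuous.measurable, ?_⟩
  ext s hs
  rw [Measure.map_apply (sphHomeo O).continuous.measurable hs]
  have hps : MeasurableSet ((sphHomeo O) ⁻¹' s) := (sphHomeo O).continuous.measurable hs
  rw [sphereMeasure, Measure.toSphere_apply' _ hps, Measure.toSphere_apply' _ hs]
  congr 1
  have him : (Subtype.val '' ((sphHomeo O) ⁻¹' s))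
      = O ⁻¹' (Subtype.val '' s) := by
    ext x
    constructor
    · rintro ⟨ξ, hξ, rfl⟩
      exact ⟨sphHomeo O ξ, hξ, rfl⟩
    · rintro ⟨η, hη, hOx⟩
      have hx : x ∈ sphere (0 : EuclideanSpace ℝ (Fin d)) 1 := by
        have h1 : ‖(η : EuclideanSpace ℝ (Fin d))‖ = 1 := by
          have := η.2; simpa [mem_sphere_iff_norm] using this
        simp only [mem_sphere_iff_norm, sub_zero]
        rw [← O.norm_map x, ← hOx, h1]
      refine ⟨⟨x, hx⟩, ?_, rfl⟩
      show sphHomeo O ⟨x, hx⟩ ∈ s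
      have : sphHomeo O ⟨x, hx⟩ = η := by
        apply Subtype.ext; exact hOx.symm
      rw [this]; exact hη
  rw [him]
  have hsmul : Set.Ioo (0:ℝ) 1 • (O ⁻¹' (Subtype.val '' s))
      = O ⁻¹' (Set.Ioo (0:ℝ) 1 • (Subtype.val '' s)) := by
    ext x
    constructor
    · rintro ⟨r, hr, y, hy, rfl⟩
      exact ⟨r, hr, O y, hy, (_root_.map_smul O r y).symm⟩
    · rintro ⟨r, hr, y, hy, hx⟩
      refine ⟨r, hr, O.symm y, by simpa using hy, ?_⟩
      have : O (r • O.symm y) = O x := by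
        rw [_root_.map_smul]; simp [← hx]
      exact O.injective this
  rw [hsmul]
  exact MeasurePreserving.measure_preimage_emb (O.measurePreserving)
    (O.toHomeomorph.measurableEmbedding) _

lemma sphHomeo_coe (O : EuclideanSpace ℝ (Fin d) ≃ₗᵢ[ℝ] EuclideanSpace ℝ (Fin d))
    (ξ : sphere (0 : EuclideanSpace ℝ (Fin d)) 1) :
    ((sphHomeo O ξ : sphere (0 : EuclideanSpace ℝ (Fin d)) 1) :
      EuclideanSpace ℝ (Fin d)) = O ξ := rfl

instance : IsFiniteMeasure (sphereMeasure d) := by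
  unfold sphereMeasure; infer_instance


lemma cont_integrable {f : sphere (0 : EuclideanSpace ℝ (Fin d)) 1 → ℝ} (hf : Continuous f) :
    Integrable f (sphereMeasure d) :=
  hf.integrable_of_hasCompactSupport (HasCompactSupport.of_compactSpace f)

lemma norm_one_of_mem (ξ : sphere (0 : EuclideanSpace ℝ (Fin d)) 1) :
    ‖(ξ : EuclideanSpace ℝ (Fin d))‖ = 1 := by
  have := ξ.2; simpa [mem_sphere_iff_norm] using this

lemma integral_inner_sq_congr {u u' : EuclideanSpace ℝ (Fin d)} (h : ‖u‖ = ‖u'‖) :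
    ∫ ξ, (inner ℝ u (ξ : EuclideanSpace ℝ (Fin d)) : ℝ)^2 ∂(sphereMeasure d)
      = ∫ ξ, (inner ℝ u' (ξ : EuclideanSpace ℝ (Fin d)) : ℝ)^2 ∂(sphereMeasure d) := by
  set O := Submodule.reflection (ℝ ∙ (u - u'))ᗮ with hO
  have hOu : O u = u' := Submodule.reflection_sub h
  have := (sphHomeo_measurePreserving O).integral_comp
    ((sphHomeo O).measurableEmbedding)
    (fun η : sphere (0 : EuclideanSpace ℝ (Fin d)) 1 =>
      (inner ℝ u' (η : EuclideanSpace ℝ (Fin d)) : ℝ)^2)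
  rw [← this]
  congr 1
  ext ξ
  rw [sphHomeo_coe, ← hOu, O.inner_map_map]

lemma integral_inner_sq (hd : 2 ≤ d) (a : EuclideanSpace ℝ (Fin d)) :
    ∫ ξ, (inner ℝ a (ξ : EuclideanSpace ℝ (Fin d)) : ℝ)^2 ∂(sphereMeasure d)
      = ‖a‖^2 * (((sphereMeasure d) Set.univ).toReal / d) := by
  set μ := sphereMeasure d
  set S := (μ Set.univ).toReal with hS
  have hd0 : (0:ℕ) < d := by omega
  set i₀ : Fin d := ⟨0, hd0⟩
  have hcont : ∀ b : EuclideanSpace ℝ (Fin d),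
      Continuous (fun ξ : sphere (0 : EuclideanSpace ℝ (Fin d)) 1 =>
        (inner ℝ b (ξ : EuclideanSpace ℝ (Fin d)) : ℝ)^2) := fun b =>
    ((innerSL ℝ b).continuous.comp continuous_subtype_val).pow 2
  -- coordinate functions
  have hcoord : ∀ i : Fin d,
      (fun ξ : sphere (0 : EuclideanSpace ℝ (Fin d)) 1 => ((ξ : EuclideanSpace ℝ (Fin d)) i)^2)
        = fun ξ : sphere (0 : EuclideanSpace ℝ (Fin d)) 1 => (inner ℝ (EuclideanSpace.single i (1:ℝ)) (ξ : EuclideanSpace ℝ (Fin d)) : ℝ)^2 := by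
    intro i; ext ξ; rw [EuclideanSpace.inner_single_left]; simp
  have heach : ∀ i : Fin d,
      ∫ ξ, ((ξ : EuclideanSpace ℝ (Fin d)) i)^2 ∂μ
        = ∫ ξ, ((ξ : EuclideanSpace ℝ (Fin d)) i₀)^2 ∂μ := by
    intro i
    rw [hcoord i, hcoord i₀]
    exact integral_inner_sq_congr (by simp [EuclideanSpace.norm_single])
  have hsum : ∑ i : Fin d, ∫ ξ, ((ξ : EuclideanSpace ℝ (Fin d)) i)^2 ∂μ = S := by
    rw [← integral_finset_sum]
    · have : ∀ ξ : sphere (0 : EuclideanSpace ℝ (Fin d)) 1,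
          ∑ i : Fin d, ((ξ : EuclideanSpace ℝ (Fin d)) i)^2 = 1 := by
        intro ξ
        have h1 := norm_one_of_mem ξ
        rw [EuclideanSpace.norm_eq] at h1
        have h2 : ∑ i, ‖(ξ : EuclideanSpace ℝ (Fin d)) i‖^2 = 1 := by
          have := congrArg (fun t : ℝ => t^2) h1
          simpa [Real.sq_sqrt (Finset.sum_nonneg fun i _ => sq_nonneg _)] using this
        simpa [Real.norm_eq_abs, sq_abs] using h2
      rw [integral_congr_ae (Filter.Eventually.of_forall (fun ξ => this ξ))]
      simp [hS, Measure.real]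
    · intro i _
      rw [hcoord i]
      exact cont_integrable (hcont _)
  have hc0 : ∫ ξ, ((ξ : EuclideanSpace ℝ (Fin d)) i₀)^2 ∂μ = S / d := by
    have : ∑ i : Fin d, ∫ ξ, ((ξ : EuclideanSpace ℝ (Fin d)) i)^2 ∂μ
        = d * ∫ ξ, ((ξ : EuclideanSpace ℝ (Fin d)) i₀)^2 ∂μ := by
      rw [Finset.sum_congr rfl fun i _ => heach i]
      simp [mul_comm]
    rw [this] at hsum
    field_simp [hsum]
    linarith [hsum]
  by_cases ha : a = 0
  · simp [ha]
  · have hna : ‖a‖ ≠ 0 := by simpa using ha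
    set u : EuclideanSpace ℝ (Fin d) := ‖a‖⁻¹ • a with hu
    have hnu : ‖u‖ = 1 := by
      rw [hu, norm_smul]; simp [hna]
    have hrw : ∀ ξ : sphere (0 : EuclideanSpace ℝ (Fin d)) 1,
        (inner ℝ a (ξ : EuclideanSpace ℝ (Fin d)) : ℝ)^2
          = ‖a‖^2 * (inner ℝ u (ξ : EuclideanSpace ℝ (Fin d)) : ℝ)^2 := by
      intro ξ
      rw [hu, real_inner_smul_left]
      rw [mul_pow]
      rw [← mul_assoc]
      rw [sq, sq]
      have : (‖a‖⁻¹)*(‖a‖⁻¹)*(‖a‖*‖a‖) = 1 := by field_simp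
      ring_nf
      ring_nf at this
      nlinarith [this]
    rw [integral_congr_ae (Filter.Eventually.of_forall hrw), integral_const_mul]
    have : ∫ ξ, (inner ℝ u (ξ : EuclideanSpace ℝ (Fin d)) : ℝ)^2 ∂μ = S / d := by
      rw [integral_inner_sq_congr (u' := EuclideanSpace.single i₀ (1:ℝ))
        (by simp [hnu, EuclideanSpace.norm_single]), ← hcoord i₀]
      exact hc0
    rw [this]

lemma sum_sq_coord (ξ : sphere (0 : EuclideanSpace ℝ (Fin d)) 1) :
    ∑ i, ((ξ : EuclideanSpace ℝ (Fin d)) i)^2 = 1 := by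
  have h1 := norm_one_of_mem ξ
  rw [EuclideanSpace.norm_eq] at h1
  have h2 : ∑ i, ‖(ξ : EuclideanSpace ℝ (Fin d)) i‖^2 = 1 := by
    have := congrArg (fun t : ℝ => t^2) h1
    simpa [Real.sq_sqrt (Finset.sum_nonneg fun i _ => sq_nonneg _)] using this
  simpa [Real.norm_eq_abs, sq_abs] using h2

/-- Pointwise Cauchy–Schwarz with one direction removed. -/
lemma key_pt {H : Type*} [NormedAddCommGroup H] [InnerProductSpace ℂ H] (v w y : H)
    (hw : ‖w‖ = 1) (hwy : (inner ℂ w y : ℂ) = 0) :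
    ‖(inner ℂ v y : ℂ)‖ ≤ Real.sqrt (‖v‖^2 - ‖(inner ℂ v w : ℂ)‖^2) * ‖y‖ := by
  set c : ℂ := inner ℂ w v with hc
  set p : H := v - c • w with hp
  have hpy : (inner ℂ p y : ℂ) = inner ℂ v y := by
    rw [hp, inner_sub_left, inner_smul_left, hwy, mul_zero, sub_zero]
  have hwp : (inner ℂ w p : ℂ) = 0 := by
    rw [hp, inner_sub_right, inner_smul_right, ← hc,
      inner_self_eq_norm_sq_to_K, hw]
    simp
  have hpcw : RCLike.re (inner ℂ p (c • w) : ℂ) = 0 := by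
    have : (inner ℂ p (c • w) : ℂ) = c * inner ℂ p w := inner_smul_right _ _ _
    have h2 : (inner ℂ p w : ℂ) = 0 := by
      rw [← inner_conj_symm, hwp, map_zero]
    rw [this, h2, mul_zero]
    simp
  have hv : v = p + c • w := by rw [hp]; abel
  have hnv : ‖v‖^2 = ‖p‖^2 + ‖c‖^2 := by
    rw [hv, @norm_add_sq ℂ, hpcw]
    rw [norm_smul, hw]
    ring
  have hvw : ‖(inner ℂ v w : ℂ)‖ = ‖c‖ := by
    rw [hc, ← inner_conj_symm w v]
    exact (Complex.norm_conj _).symm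
  have hsqrt : Real.sqrt (‖v‖^2 - ‖(inner ℂ v w : ℂ)‖^2) = ‖p‖ := by
    rw [hvw, hnv]
    simp [Real.sqrt_sq, norm_nonneg]
  rw [hsqrt, ← hpy]
  exact norm_inner_le_norm p y

lemma integral_abs_sq (hd : 2 ≤ d) (v : EuclideanSpace ℂ (Fin d)) :
    ∫ ξ, (‖∑ j, conj (v j) * (((ξ : sphere (0 : EuclideanSpace ℝ (Fin d)) 1) :
        EuclideanSpace ℝ (Fin d)) j : ℂ)‖)^2 ∂(sphereMeasure d)
      = ‖v‖^2 * (((sphereMeasure d) Set.univ).toReal / d) := by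
  set μ := sphereMeasure d with hμ
  set a : EuclideanSpace ℝ (Fin d) := (WithLp.equiv 2 (Fin d → ℝ)).symm fun j => (v j).re with ha
  set b : EuclideanSpace ℝ (Fin d) := (WithLp.equiv 2 (Fin d → ℝ)).symm fun j => (v j).im with hb
  have haj : ∀ j, a j = (v j).re := fun j => rfl
  have hbj : ∀ j, b j = (v j).im := fun j => rfl
  have hre : ∀ ξ : sphere (0 : EuclideanSpace ℝ (Fin d)) 1,
      (∑ j, conj (v j) * (((ξ : EuclideanSpace ℝ (Fin d)) j : ℝ) : ℂ)).re
        = (inner ℝ a (ξ : EuclideanSpace ℝ (Fin d)) : ℝ) := by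
    intro ξ
    rw [Complex.re_sum, PiLp.inner_apply]
    refine Finset.sum_congr rfl fun j _ => ?_
    simp [Complex.mul_re, haj, RCLike.inner_apply, mul_comm]
  have him : ∀ ξ : sphere (0 : EuclideanSpace ℝ (Fin d)) 1,
      (∑ j, conj (v j) * (((ξ : EuclideanSpace ℝ (Fin d)) j : ℝ) : ℂ)).im
        = -(inner ℝ b (ξ : EuclideanSpace ℝ (Fin d)) : ℝ) := by
    intro ξ
    rw [Complex.im_sum, PiLp.inner_apply, ← Finset.sum_neg_distrib]
    refine Finset.sum_congr rfl fun j _ => ?_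
    simp [Complex.mul_im, hbj, RCLike.inner_apply, mul_comm]
  have hpt : ∀ ξ : sphere (0 : EuclideanSpace ℝ (Fin d)) 1,
      (‖∑ j, conj (v j) * (((ξ : EuclideanSpace ℝ (Fin d)) j : ℝ) : ℂ)‖)^2
        = (inner ℝ a (ξ : EuclideanSpace ℝ (Fin d)) : ℝ)^2
          + (inner ℝ b (ξ : EuclideanSpace ℝ (Fin d)) : ℝ)^2 := by
    intro ξ
    rw [Complex.sq_norm, Complex.normSq_apply, hre ξ, him ξ]
    ring
  have hIa : Integrable (fun ξ : sphere (0 : EuclideanSpace ℝ (Fin d)) 1 =>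
      (inner ℝ a (ξ : EuclideanSpace ℝ (Fin d)) : ℝ)^2) μ :=
    cont_integrable (((innerSL ℝ a).continuous.comp continuous_subtype_val).pow 2)
  have hIb : Integrable (fun ξ : sphere (0 : EuclideanSpace ℝ (Fin d)) 1 =>
      (inner ℝ b (ξ : EuclideanSpace ℝ (Fin d)) : ℝ)^2) μ :=
    cont_integrable (((innerSL ℝ b).continuous.comp continuous_subtype_val).pow 2)
  rw [integral_congr_ae (Filter.Eventually.of_forall hpt), integral_add hIa hIb,
    integral_inner_sq hd a, integral_inner_sq hd b]
  have hv2 : ‖a‖^2 + ‖b‖^2 = ‖v‖^2 := by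
    have hA : ‖a‖^2 = ∑ j, (v j).re^2 := by
      rw [EuclideanSpace.norm_eq, Real.sq_sqrt (Finset.sum_nonneg fun j _ => sq_nonneg _)]
      refine Finset.sum_congr rfl fun j _ => ?_
      rw [haj j, Real.norm_eq_abs, sq_abs]
    have hB : ‖b‖^2 = ∑ j, (v j).im^2 := by
      rw [EuclideanSpace.norm_eq, Real.sq_sqrt (Finset.sum_nonneg fun j _ => sq_nonneg _)]
      refine Finset.sum_congr rfl fun j _ => ?_
      rw [hbj j, Real.norm_eq_abs, sq_abs]
    have hV : ‖v‖^2 = ∑ j, ((v j).re^2 + (v j).im^2) := by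
      rw [EuclideanSpace.norm_eq, Real.sq_sqrt (Finset.sum_nonneg fun j _ => sq_nonneg _)]
      refine Finset.sum_congr rfl fun j _ => ?_
      rw [Complex.sq_norm, Complex.normSq_apply]
      ring
    rw [hA, hB, hV, ← Finset.sum_add_distrib]
  rw [← hv2]
  ring

/-- If `E(x) = ∫_{|ξ|=1} e^{ix·ξ} e(ξ) dσ` with `e ∈ L²(S^{d-1};ℂ^d)` tangential
(`ξ·e(ξ) = 0` a.e.), then `|E(0)| ≤ (((d-1)/d)|S^{d-1}|)^{1/2} ‖e‖_{L²}`. -/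
theorem stmt_1 (d : ℕ) (hd : 2 ≤ d)
    (e : sphere (0 : EuclideanSpace ℝ (Fin d)) 1 → EuclideanSpace ℂ (Fin d))
    (he : MemLp e 2 (sphereMeasure d))
    (htang : ∀ᵐ (ξ : sphere (0 : EuclideanSpace ℝ (Fin d)) 1) ∂(sphereMeasure d),
      ∑ j, ((ξ : EuclideanSpace ℝ (Fin d)) j : ℂ) * e ξ j = 0)
    (E : EuclideanSpace ℝ (Fin d) → EuclideanSpace ℂ (Fin d))
    (hE : ∀ x, E x = ∫ ξ, Complex.exp (Complex.I *
        ((inner ℝ x (ξ : EuclideanSpace ℝ (Fin d)) : ℝ) : ℂ)) • e ξ ∂(sphereMeasure d)) :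
    ‖E 0‖ ≤ Real.sqrt (((d - 1 : ℝ) / d) * (sphereMeasure d Set.univ).toReal) *
        Real.sqrt (∫ ξ, ‖e ξ‖ ^ 2 ∂(sphereMeasure d)) := by
  classical
  set μ := sphereMeasure d with hμ
  have he1 : Integrable e μ := he.integrable one_le_two
  have hE0 : E 0 = ∫ ξ, e ξ ∂μ := by
    rw [hE 0]
    refine integral_congr_ae (Filter.Eventually.of_forall fun ξ => ?_)
    simp [inner_zero_left]
  set v : EuclideanSpace ℂ (Fin d) := E 0 with hv
  set S := (μ Set.univ).toReal with hS
  have hS0 : 0 ≤ S := ENNReal.toReal_nonneg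
  set c : sphere (0 : EuclideanSpace ℝ (Fin d)) 1 → ℂ := fun ξ =>
    ∑ j, conj (v j) * (((ξ : EuclideanSpace ℝ (Fin d)) j : ℝ) : ℂ) with hc
  set g : sphere (0 : EuclideanSpace ℝ (Fin d)) 1 → ℝ := fun ξ =>
    Real.sqrt (‖v‖^2 - (‖c ξ‖)^2) with hg
  -- the tangent complexified vector
  set w : sphere (0 : EuclideanSpace ℝ (Fin d)) 1 → EuclideanSpace ℂ (Fin d) := fun ξ =>
    (WithLp.equiv 2 (Fin d → ℂ)).symm fun j => (((ξ : EuclideanSpace ℝ (Fin d)) j : ℝ) : ℂ)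
    with hw
  have hwj : ∀ ξ j, w ξ j = (((ξ : EuclideanSpace ℝ (Fin d)) j : ℝ) : ℂ) := fun ξ j => rfl
  have hwnorm : ∀ ξ, ‖w ξ‖ = 1 := by
    intro ξ
    rw [EuclideanSpace.norm_eq]
    have : ∑ j, ‖w ξ j‖^2 = 1 := by
      have := sum_sq_coord ξ
      simp only [hwj, Complex.norm_real, Real.norm_eq_abs, sq_abs]
      exact this
    rw [this, Real.sqrt_one]
  have hcw : ∀ ξ, (inner ℂ v (w ξ) : ℂ) = c ξ := by
    intro ξ
    rw [PiLp.inner_apply]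
    refine Finset.sum_congr rfl fun j _ => ?_
    rw [hwj, RCLike.inner_apply, mul_comm]
  have habs_le : ∀ ξ, ‖c ξ‖ ≤ ‖v‖ := by
    intro ξ
    rw [← hcw ξ]
    calc ‖(inner ℂ v (w ξ) : ℂ)‖ ≤ ‖v‖ * ‖w ξ‖ := norm_inner_le_norm v (w ξ)
    _ = ‖v‖ := by rw [hwnorm ξ, mul_one]
  have hgnonneg : ∀ ξ, 0 ≤ g ξ := fun ξ => Real.sqrt_nonneg _
  have hgle : ∀ ξ, g ξ ≤ ‖v‖ := by
    intro ξ
    calc g ξ ≤ Real.sqrt (‖v‖^2) :=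
      Real.sqrt_le_sqrt (by nlinarith [sq_nonneg (‖c ξ‖)])
    _ = ‖v‖ := Real.sqrt_sq (norm_nonneg v)
  have hccont : Continuous c := by
    refine continuous_finset_sum _ fun j _ => continuous_const.mul ?_
    exact Complex.continuous_ofReal.comp
      ((EuclideanSpace.proj j).continuous.comp continuous_subtype_val)
  have hgcont : Continuous g :=
    Real.continuous_sqrt.comp (continuous_const.sub ((continuous_norm.comp hccont).pow 2))
  -- a.e. pointwise bound
  have hae : ∀ᵐ ξ ∂μ, RCLike.re (inner ℂ v (e ξ) : ℂ) ≤ g ξ * ‖e ξ‖ := by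
    filter_upwards [htang] with ξ h0
    have hwe : (inner ℂ (w ξ) (e ξ) : ℂ) = 0 := by
      rw [PiLp.inner_apply]
      rw [← h0]
      refine Finset.sum_congr rfl fun j _ => ?_
      rw [hwj, RCLike.inner_apply, Complex.conj_ofReal, mul_comm]
    have h1 := key_pt v (w ξ) (e ξ) (hwnorm ξ) hwe
    calc RCLike.re (inner ℂ v (e ξ) : ℂ) ≤ ‖(inner ℂ v (e ξ) : ℂ)‖ := RCLike.re_le_norm _
    _ ≤ Real.sqrt (‖v‖^2 - ‖(inner ℂ v (w ξ) : ℂ)‖^2) * ‖e ξ‖ := h1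
    _ = g ξ * ‖e ξ‖ := by rw [hcw ξ, hg]
  -- ‖v‖² as an integral
  have h2 : ‖v‖^2 = ∫ ξ, RCLike.re (inner ℂ v (e ξ) : ℂ) ∂μ := by
    rw [integral_re (he1.const_inner v), integral_inner he1 v, ← hE0]
    exact (inner_self_eq_norm_sq (𝕜 := ℂ) v).symm
  have hint1 : Integrable (fun ξ => RCLike.re (inner ℂ v (e ξ) : ℂ)) μ :=
    (he1.const_inner v).re
  have hint2 : Integrable (fun ξ => g ξ * ‖e ξ‖) μ :=
    Integrable.bdd_mul (c := ‖v‖) he1.norm hgcont.aestronglyMeasurable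
      (Filter.Eventually.of_forall fun ξ => by rw [Real.norm_eq_abs, abs_of_nonneg (hgnonneg ξ)]; exact hgle ξ)
  have h3 : ∫ ξ, RCLike.re (inner ℂ v (e ξ) : ℂ) ∂μ ≤ ∫ ξ, g ξ * ‖e ξ‖ ∂μ :=
    integral_mono_ae hint1 hint2 hae
  -- Hölder
  have hpq : Real.HolderConjugate 2 2 := ⟨by norm_num, by norm_num, by norm_num⟩
  have hof2 : (ENNReal.ofReal 2) = (2 : ℝ≥0∞) := by simp
  have hg2 : MemLp g (ENNReal.ofReal 2) μ := by
    rw [hof2]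
    exact MemLp.of_bound hgcont.aestronglyMeasurable ‖v‖
      (Filter.Eventually.of_forall fun ξ => by
        rw [Real.norm_eq_abs, abs_of_nonneg (hgnonneg ξ)]; exact hgle ξ)
  have he2' : MemLp (fun ξ => ‖e ξ‖) (ENNReal.ofReal 2) μ := by
    rw [hof2]; exact he.norm
  have h4 := integral_mul_le_Lp_mul_Lq_of_nonneg hpq
    (Filter.Eventually.of_forall hgnonneg)
    (Filter.Eventually.of_forall fun ξ => norm_nonneg (e ξ)) hg2 he2'
  simp only [Real.rpow_two] at h4
  rw [← Real.sqrt_eq_rpow, ← Real.sqrt_eq_rpow] at h4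
  -- compute ∫ g²
  have h6 : ∫ ξ, g ξ ^ 2 ∂μ = ‖v‖^2 * (((d:ℝ) - 1) / d * S) := by
    have hgsq : ∀ ξ, g ξ ^ 2 = ‖v‖^2 - (‖c ξ‖)^2 := by
      intro ξ
      rw [hg]
      have ha1 := habs_le ξ
      have ha2 := norm_nonneg (c ξ)
      have ha3 : (‖c ξ‖)^2 ≤ ‖v‖^2 := by nlinarith
      exact Real.sq_sqrt (by linarith)
    have hIabs : Integrable (fun ξ : sphere (0 : EuclideanSpace ℝ (Fin d)) 1 =>
        (‖c ξ‖)^2) μ :=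
      cont_integrable ((continuous_norm.comp hccont).pow 2)
    rw [integral_congr_ae (Filter.Eventually.of_forall hgsq),
      integral_sub (integrable_const _) hIabs, integral_const]
    have habsint : ∫ ξ, (‖c ξ‖)^2 ∂μ = ‖v‖^2 * (S / d) :=
      integral_abs_sq hd v
    rw [habsint]
    have hdpos : (0:ℝ) < d := by positivity
    field_simp
    rw [show μ.real Set.univ = S from rfl]; ring
  have h1d : (1:ℝ) ≤ (d:ℝ) := by exact_mod_cast Nat.one_le_of_lt hd
  have hd1 : (0:ℝ) ≤ ((d:ℝ) - 1) / d * S :=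
    mul_nonneg (div_nonneg (by linarith) (by linarith)) hS0
  have hsqrtg : Real.sqrt (∫ ξ, g ξ ^ 2 ∂μ) = ‖v‖ * Real.sqrt (((d:ℝ) - 1) / d * S) := by
    rw [h6, Real.sqrt_mul (sq_nonneg _), Real.sqrt_sq (norm_nonneg v)]
  -- combine
  have hmain : ‖v‖^2 ≤ ‖v‖ * (Real.sqrt (((d:ℝ) - 1) / d * S) *
      Real.sqrt (∫ ξ, ‖e ξ‖ ^ 2 ∂μ)) := by
    calc ‖v‖^2 ≤ ∫ ξ, g ξ * ‖e ξ‖ ∂μ := h2.le.trans h3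
    _ ≤ Real.sqrt (∫ ξ, g ξ ^ 2 ∂μ) * Real.sqrt (∫ ξ, ‖e ξ‖ ^ 2 ∂μ) := h4
    _ = ‖v‖ * (Real.sqrt (((d:ℝ) - 1) / d * S) * Real.sqrt (∫ ξ, ‖e ξ‖ ^ 2 ∂μ)) := by
      rw [hsqrtg]; ring
  have hfinal : ‖v‖ ≤ Real.sqrt (((d:ℝ) - 1) / d * S) *
      Real.sqrt (∫ ξ, ‖e ξ‖ ^ 2 ∂μ) := by
    by_cases hv0 : ‖v‖ = 0
    · rw [hv0]
      exact mul_nonneg (Real.sqrt_nonneg _) (Real.sqrt_nonneg _)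
    · have hpos : 0 < ‖v‖ := lt_of_le_of_ne (norm_nonneg v) (Ne.symm hv0)
      refine le_of_mul_le_mul_left ?_ hpos
      calc ‖v‖ * ‖v‖ = ‖v‖^2 := (sq ‖v‖).symm
      _ ≤ _ := hmain
  exact hfinal
end

section
/- Let h(R) = 2/3 − (2/3)·R⁴/(16·36) − R²/16. Then h(π/2) > 0; in fact h is decreasing on [0, ∞) and h(2) = 43/108 > 0, hence h(R) > 0 for all 0 ≤ R ≤ 2. Consequently, for 0 < R ≤ π/2, (Λ_{3,0}(R) − Λ_{3,2}(R))·(2/3) > Λ_{3,1}(R). -/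
/-- The Bessel function of order `ν > -1/2`, via the Poisson integral representation. -/
noncomputable def besselJ (ν : ℝ) (t : ℝ) : ℝ :=
  (2 * (t / 2) ^ ν / (Real.Gamma (ν + 1 / 2) * Real.Gamma (1 / 2))) *
    ∫ s in (0 : ℝ)..1, Real.cos (t * s) * (1 - s ^ 2) ^ (ν - 1 / 2)

/-- `Λ_{3,k}(R) = (2π)^{3/2} · 4π · ∫_0^R r [J_{(2k+1)/2}(r)]² dr`. -/
noncomputable def Lambda3 (k : ℕ) (R : ℝ) : ℝ :=
  (2 * Real.pi) ^ ((3 : ℝ) / 2) * (4 * Real.pi) *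
    ∫ r in (0 : ℝ)..R, r * (besselJ ((2 * (k : ℝ) + 1) / 2) r) ^ 2

open Real Set MeasureTheory intervalIntegral

lemma nonneg_of_deriv {F F' : ℝ → ℝ} {B : ℝ} (hF : ∀ x, HasDerivAt F (F' x) x)
    (h0 : F 0 = 0) (hd : ∀ x, 0 ≤ x → x ≤ B → 0 ≤ F' x) :
    ∀ x, 0 ≤ x → x ≤ B → 0 ≤ F x := by
  intro x hx hxB
  have hdiff : Differentiable ℝ F := fun y => (hF y).differentiableAt
  have hm : MonotoneOn F (Icc 0 B) := by
    apply monotoneOn_of_deriv_nonneg (convex_Icc 0 B) hdiff.continuous.continuousOn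
      (hdiff.differentiableOn)
    intro y hy
    rw [(hF y).deriv]
    rw [interior_Icc, mem_Ioo] at hy
    exact hd y hy.1.le hy.2.le
  calc (0:ℝ) = F 0 := h0.symm
    _ ≤ F x := hm ⟨le_refl 0, hx.trans hxB⟩ ⟨hx, hxB⟩ hx

-- L1 : x - x^3/6 ≤ sin x for x ≥ 0
lemma L1 : ∀ x : ℝ, 0 ≤ x → x ≤ 2 → 0 ≤ sin x - (x - x^3/6) := by
  apply nonneg_of_deriv (F' := fun x => cos x - (1 - x^2/2))
  · intro x
    have : HasDerivAt (fun x : ℝ => sin x - (x - x^3/6)) (cos x - (1 - 3*x^2/6)) x := by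
      exact (hasDerivAt_sin x).sub (((hasDerivAt_id x).sub
        (((hasDerivAt_pow 3 x)).div_const 6)).congr_deriv (by ring))
    exact this.congr_deriv (by ring)
  · simp
  · intro x _ _; nlinarith [Real.one_sub_sq_div_two_le_cos (x := x)]

-- L2 : cos x ≤ 1 - x^2/2 + x^4/24 for 0 ≤ x ≤ 2
lemma L2 : ∀ x : ℝ, 0 ≤ x → x ≤ 2 → 0 ≤ (1 - x^2/2 + x^4/24) - cos x := by
  apply nonneg_of_deriv (F' := fun x => (x^3/6 - x) + sin x)
  · intro x
    have : HasDerivAt (fun x : ℝ => (1 - x^2/2 + x^4/24) - cos x)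
        ((0 - 2*x/2 + 4*x^3/24) - (-sin x)) x := by
      exact (((hasDerivAt_const x (1:ℝ)).sub ((hasDerivAt_pow 2 x).div_const 2)).add
        ((hasDerivAt_pow 4 x).div_const 24)).sub (hasDerivAt_cos x) |>.congr_deriv (by
          push_cast; ring)
    exact this.congr_deriv (by ring)
  · simp
  · intro x hx hx2; nlinarith [L1 x hx hx2]

-- L3 : sin x ≤ x - x^3/6 + x^5/120 for 0 ≤ x ≤ 2
lemma L3 : ∀ x : ℝ, 0 ≤ x → x ≤ 2 → 0 ≤ (x - x^3/6 + x^5/120) - sin x := by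
  apply nonneg_of_deriv (F' := fun x => (1 - x^2/2 + x^4/24) - cos x)
  · intro x
    have : HasDerivAt (fun x : ℝ => (x - x^3/6 + x^5/120) - sin x)
        ((1 - 3*x^2/6 + 5*x^4/120) - cos x) x := by
      exact (((hasDerivAt_id x).sub ((hasDerivAt_pow 3 x).div_const 6)).add
        ((hasDerivAt_pow 5 x).div_const 120)).sub (hasDerivAt_sin x) |>.congr_deriv (by
          push_cast; ring)
    exact this.congr_deriv (by ring)
  · simp
  · exact L2

lemma hg_deriv (x : ℝ) : HasDerivAt (fun x : ℝ => sin x - x * cos x) (x * sin x) x := by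
  have : HasDerivAt (fun x : ℝ => sin x - x * cos x)
      (cos x - (1 * cos x + x * (-sin x))) x :=
    (hasDerivAt_sin x).sub ((hasDerivAt_id x).mul (hasDerivAt_cos x))
  exact this.congr_deriv (by ring)

lemma hG_deriv (x : ℝ) : HasDerivAt (fun x : ℝ => (3 - x^2) * sin x - 3 * x * cos x)
    (x * (sin x - x * cos x)) x := by
  have : HasDerivAt (fun x : ℝ => (3 - x^2) * sin x - 3 * x * cos x)
      (((0 - 2*x^1) * sin x + (3 - x^2) * cos x) - ((3*1) * cos x + (3*x) * (-sin x))) x := by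
    exact (((hasDerivAt_const x (3:ℝ)).sub (hasDerivAt_pow 2 x)).mul (hasDerivAt_sin x)).sub
      (((hasDerivAt_id x).const_mul 3).mul (hasDerivAt_cos x)) |>.congr_deriv (by simp only [id_eq, Pi.sub_apply]; push_cast; ring)
  exact this.congr_deriv (by ring)

lemma g_nonneg : ∀ x : ℝ, 0 ≤ x → x ≤ 2 → 0 ≤ sin x - x * cos x := by
  apply nonneg_of_deriv (F' := fun x => x * sin x) hg_deriv (by simp)
  intro x hx hx2
  exact mul_nonneg hx (sin_nonneg_of_nonneg_of_le_pi hx (hx2.trans (by linarith [pi_gt_three])))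

lemma g_le : ∀ x : ℝ, 0 ≤ x → x ≤ 2 →
    0 ≤ (x^3/3 - x^5/30 + x^7/840) - (sin x - x * cos x) := by
  apply nonneg_of_deriv (F' := fun x => x * ((x - x^3/6 + x^5/120) - sin x))
  · intro x
    have : HasDerivAt (fun x : ℝ => (x^3/3 - x^5/30 + x^7/840) - (sin x - x * cos x))
        ((3*x^2/3 - 5*x^4/30 + 7*x^6/840) - x * sin x) x := by
      exact (((hasDerivAt_pow 3 x).div_const 3 |>.sub ((hasDerivAt_pow 5 x).div_const 30)).add
        ((hasDerivAt_pow 7 x).div_const 840)).sub (hg_deriv x) |>.congr_deriv (by push_cast; ring)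
    exact this.congr_deriv (by ring)
  · simp
  · intro x hx hx2; exact mul_nonneg hx (L3 x hx hx2)

lemma g_le' : ∀ x : ℝ, 0 ≤ x → x ≤ 2 → 0 ≤ x^3/3 - (sin x - x * cos x) := by
  apply nonneg_of_deriv (F' := fun x => x * (x - sin x))
  · intro x
    have : HasDerivAt (fun x : ℝ => x^3/3 - (sin x - x * cos x))
        (3*x^2/3 - x * sin x) x := by
      exact ((hasDerivAt_pow 3 x).div_const 3).sub (hg_deriv x) |>.congr_deriv (by push_cast; ring)
    exact this.congr_deriv (by ring)
  · simp
  · intro x hx _; exact mul_nonneg hx (by nlinarith [Real.sin_le hx])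

lemma G_nonneg : ∀ x : ℝ, 0 ≤ x → x ≤ 2 → 0 ≤ (3 - x^2) * sin x - 3 * x * cos x := by
  apply nonneg_of_deriv (F' := fun x => x * (sin x - x * cos x)) hG_deriv (by simp)
  intro x hx hx2; exact mul_nonneg hx (g_nonneg x hx hx2)

lemma G_le : ∀ x : ℝ, 0 ≤ x → x ≤ 2 → 0 ≤ x^5/15 - ((3 - x^2) * sin x - 3 * x * cos x) := by
  apply nonneg_of_deriv (F' := fun x => x * (x^3/3 - (sin x - x * cos x)))
  · intro x
    have : HasDerivAt (fun x : ℝ => x^5/15 - ((3 - x^2) * sin x - 3 * x * cos x))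
        (5*x^4/15 - x * (sin x - x * cos x)) x := by
      exact ((hasDerivAt_pow 5 x).div_const 15).sub (hG_deriv x) |>.congr_deriv (by push_cast; ring)
    exact this.congr_deriv (by ring)
  · simp
  · intro x hx hx2; exact mul_nonneg hx (g_le' x hx hx2)

lemma hsin (t s : ℝ) : HasDerivAt (fun s => sin (t*s)) (t * cos (t*s)) s := by
  have := (Real.hasDerivAt_sin (t*s)).comp s ((hasDerivAt_id s).const_mul t)
  simpa [mul_comm, Function.comp_def] using this

lemma hcos (t s : ℝ) : HasDerivAt (fun s => cos (t*s)) (-(t * sin (t*s))) s := by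
  have := (Real.hasDerivAt_cos (t*s)).comp s ((hasDerivAt_id s).const_mul t)
  simpa [mul_comm, Function.comp_def] using this

lemma int0 (ht : t ≠ 0) : ∫ s in (0:ℝ)..1, cos (t*s) * (1 - s^2) ^ ((0:ℝ)) = sin t / t := by
  have h : ∀ s ∈ uIcc (0:ℝ) 1, HasDerivAt (fun s => sin (t*s) / t) (cos (t*s) * (1 - s^2) ^ ((0:ℝ))) s := by
    intro s _
    have := (hsin t s).div_const t
    refine this.congr_deriv ?_
    rw [Real.rpow_zero]
    field_simp
  rw [integral_eq_sub_of_hasDerivAt h (by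
    apply Continuous.intervalIntegrable
    have : (fun s : ℝ => cos (t*s) * (1 - s^2) ^ ((0:ℝ))) = fun s => cos (t*s) := by
      funext s; rw [Real.rpow_zero, mul_one]
    rw [this]; continuity)]
  simp

lemma int1 (ht : t ≠ 0) : ∫ s in (0:ℝ)..1, cos (t*s) * (1 - s^2) ^ ((1:ℝ)) =
    2*(sin t - t*cos t)/t^3 := by
  have h : ∀ s ∈ uIcc (0:ℝ) 1, HasDerivAt
      (fun s => ((1-s^2)*t^2+2) * sin (t*s) / t^3 - 2*s*cos (t*s)/t^2)
      (cos (t*s) * (1 - s^2) ^ ((1:ℝ))) s := by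
    intro s _
    have h1 : HasDerivAt (fun s : ℝ => ((1-s^2)*t^2+2) * sin (t*s) / t^3)
        ((((0 - 2*s^1)*t^2) * sin (t*s) + ((1-s^2)*t^2+2) * (t * cos (t*s))) / t^3) s :=
      (((((hasDerivAt_const s (1:ℝ)).sub (hasDerivAt_pow 2 s)).mul_const (t^2)).add_const 2).mul
        (hsin t s)).div_const (t^3)
    have h2 : HasDerivAt (fun s : ℝ => 2*s*cos (t*s)/t^2)
        ((2 * cos (t*s) + 2*s * (-(t * sin (t*s)))) / t^2) s := by
      have := (((hasDerivAt_id s).const_mul 2).mul (hcos t s)).div_const (t^2)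
      simpa [id] using this
    refine (h1.sub h2).congr_deriv ?_
    rw [Real.rpow_one]
    field_simp
    ring
  rw [integral_eq_sub_of_hasDerivAt h (by
    apply Continuous.intervalIntegrable
    have : (fun s : ℝ => cos (t*s) * (1 - s^2) ^ ((1:ℝ))) = fun s => cos (t*s) * (1 - s^2) := by
      funext s; rw [Real.rpow_one]
    rw [this]; continuity)]
  field_simp
  simp only [mul_zero, sin_zero, cos_zero]; ring

lemma int2 (ht : t ≠ 0) : ∫ s in (0:ℝ)..1, cos (t*s) * (1 - s^2) ^ ((2:ℝ)) =
    8*((3-t^2)*sin t - 3*t*cos t)/t^5 := by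
  have h : ∀ s ∈ uIcc (0:ℝ) 1, HasDerivAt
      (fun s => (s^4 - (2+12/t^2)*s^2 + (1+4/t^2+24/t^4)) * sin (t*s) / t
        + ((4*s^3 - (4+24/t^2)*s)/t^2) * cos (t*s))
      (cos (t*s) * (1 - s^2) ^ ((2:ℝ))) s := by
    intro s _
    have h1 : HasDerivAt (fun s : ℝ => (s^4 - (2+12/t^2)*s^2 + (1+4/t^2+24/t^4)) * sin (t*s) / t)
        (((4*s^3 - (2+12/t^2)*(2*s^1)) * sin (t*s)
          + (s^4 - (2+12/t^2)*s^2 + (1+4/t^2+24/t^4)) * (t * cos (t*s))) / t) s := by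
      have := ((((hasDerivAt_pow 4 s).sub (((hasDerivAt_pow 2 s)).const_mul (2+12/t^2))).add_const
        (1+4/t^2+24/t^4)).mul (hsin t s)).div_const t
      refine this.congr_deriv ?_
      simp only [Pi.sub_apply, Pi.add_apply, Pi.mul_apply]; push_cast; ring
    have h2 : HasDerivAt (fun s : ℝ => ((4*s^3 - (4+24/t^2)*s)/t^2) * cos (t*s))
        (((4*(3*s^2) - (4+24/t^2))/t^2) * cos (t*s)
          + ((4*s^3 - (4+24/t^2)*s)/t^2) * (-(t * sin (t*s)))) s := by
      have := (((((hasDerivAt_pow 3 s).const_mul 4).sub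
        ((hasDerivAt_id s).const_mul (4+24/t^2))).div_const (t^2)).mul (hcos t s))
      refine this.congr_deriv ?_
      simp only [id_eq, Pi.sub_apply, Pi.mul_apply]; push_cast; ring
    refine (h1.add h2).congr_deriv ?_
    rw [show ((2:ℝ)) = ((2:ℕ):ℝ) by norm_num, Real.rpow_natCast]
    field_simp
    ring
  rw [integral_eq_sub_of_hasDerivAt h (by
    apply Continuous.intervalIntegrable
    have : (fun s : ℝ => cos (t*s) * (1 - s^2) ^ ((2:ℝ))) = fun s => cos (t*s) * (1 - s^2)^2 := by
      funext s; rw [show ((2:ℝ)) = ((2:ℕ):ℝ) by norm_num, Real.rpow_natCast]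
    rw [this]; continuity)]
  field_simp
  simp only [mul_zero, sin_zero, cos_zero]; ring

lemma rpow_sq_eq {r : ℝ} (hr : 0 < r) (a : ℝ) (n : ℕ) (han : a + a = n) :
    ((r/2) ^ a)^2 = (r/2)^n := by
  rw [sq, ← Real.rpow_add (by positivity), han, Real.rpow_natCast]

lemma Jsq0 {r : ℝ} (hr : 0 < r) :
    r * (besselJ (1/2) r)^2 = 2/π * sin r ^ 2 := by
  rw [besselJ, show ((1:ℝ)/2 - 1/2) = (0:ℝ) by norm_num, int0 hr.ne',
    show ((1:ℝ)/2 + 1/2) = 1 by norm_num, Real.Gamma_one, Real.Gamma_one_half_eq]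
  have h1 := rpow_sq_eq hr (1/2) 1 (by norm_num)
  have h2 : Real.sqrt π ^ 2 = π := Real.sq_sqrt pi_pos.le
  field_simp
  rw [h1, h2]; ring

lemma Jsq1 {r : ℝ} (hr : 0 < r) :
    r * (besselJ (3/2) r)^2 = 2/π * ((sin r - r*cos r)/r) ^ 2 := by
  rw [besselJ, show ((3:ℝ)/2 - 1/2) = (1:ℝ) by norm_num, int1 hr.ne',
    show ((3:ℝ)/2 + 1/2) = 2 by norm_num, Real.Gamma_two, Real.Gamma_one_half_eq]
  have h1 := rpow_sq_eq hr (3/2) 3 (by norm_num)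
  have h2 : Real.sqrt π ^ 2 = π := Real.sq_sqrt pi_pos.le
  field_simp
  rw [h1, h2]; ring

lemma Jsq2 {r : ℝ} (hr : 0 < r) :
    r * (besselJ (5/2) r)^2 = 2/π * (((3-r^2)*sin r - 3*r*cos r)/r^2) ^ 2 := by
  rw [besselJ, show ((5:ℝ)/2 - 1/2) = (2:ℝ) by norm_num, int2 hr.ne',
    show ((5:ℝ)/2 + 1/2) = 3 by norm_num,
    show (3:ℝ) = ((2:ℕ):ℝ) + 1 by norm_num, Real.Gamma_nat_eq_factorial,
    Real.Gamma_one_half_eq]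
  have h1 := rpow_sq_eq hr (5/2) 5 (by norm_num)
  have h2 : Real.sqrt π ^ 2 = π := Real.sq_sqrt pi_pos.le
  field_simp
  rw [h1, h2]; ring

lemma Epos (r : ℝ) (h0 : 0 < r) (h1 : r ≤ 1.575) :
    (r^2*(1/3 - r^2/30 + r^4/840))^2 + (2/3)*(r^3/15)^2 < (2/3)*(r - r^3/6)^2 := by
  have hx : r^2 ≤ 2.481 := by nlinarith
  have hx0 : (0:ℝ) ≤ r^2 := sq_nonneg r
  have key : 0 < 2 - r^2 + (17/150)*(r^2)^2 - (r^2)^3/175 + ((r^2)^2)^2/4200 - (r^2)^5/235200 := by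
    nlinarith [mul_nonneg (mul_nonneg (sub_nonneg.2 hx) hx0) hx0,
      mul_nonneg (sub_nonneg.2 hx) (pow_nonneg hx0 4),
      mul_nonneg (sub_nonneg.2 hx) (pow_nonneg hx0 2), hx0, pow_nonneg hx0 3]
  nlinarith [mul_pos (mul_pos h0 h0) key]

set_option maxHeartbeats 2000000 in
lemma lambda_ineq {R : ℝ} (hR0 : 0 < R) (hRpi : R ≤ π/2) :
    Lambda3 1 R < (Lambda3 0 R - Lambda3 2 R) * (2/3) := by
  have hpi : π < 3.15 := pi_lt_d2
  have hR15 : R ≤ 1.575 := by linarith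
  have hR2 : R ≤ 2 := by linarith
  have hCpos : 0 < (2 * π) ^ ((3 : ℝ) / 2) * (4 * π) := by positivity
  set c0 : ℝ → ℝ := fun r => 2/π * sin r ^ 2 with hc0def
  set c1 : ℝ → ℝ := fun r => 2/π * ((sin r - r*cos r)/r) ^ 2 with hc1def
  set c2 : ℝ → ℝ := fun r => 2/π * (((3-r^2)*sin r - 3*r*cos r)/r^2) ^ 2 with hc2def
  set l0 : ℝ → ℝ := fun r => 2/π * (r - r^3/6)^2 with hl0def
  set u1 : ℝ → ℝ := fun r => 2/π * (r^2*(1/3 - r^2/30 + r^4/840))^2 with hu1def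
  set u2 : ℝ → ℝ := fun r => 2/π * (r^3/15)^2 with hu2def
  -- rewrite the three Lambda integrals
  have e0 : (∫ r in (0:ℝ)..R, r * (besselJ ((2 * ((0:ℕ) : ℝ) + 1) / 2) r) ^ 2)
      = ∫ r in (0:ℝ)..R, c0 r := by
    apply intervalIntegral.integral_congr
    intro r hr
    rw [uIcc_of_le hR0.le] at hr
    rcases eq_or_lt_of_le hr.1 with h | h
    · simp [← h, hc0def]
    · rw [show ((2 * ((0:ℕ) : ℝ) + 1) / 2) = 1/2 by norm_num]
      exact Jsq0 h
  have e1 : (∫ r in (0:ℝ)..R, r * (besselJ ((2 * ((1:ℕ) : ℝ) + 1) / 2) r) ^ 2)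
      = ∫ r in (0:ℝ)..R, c1 r := by
    apply intervalIntegral.integral_congr
    intro r hr
    rw [uIcc_of_le hR0.le] at hr
    rcases eq_or_lt_of_le hr.1 with h | h
    · simp [← h, hc1def]
    · rw [show ((2 * ((1:ℕ) : ℝ) + 1) / 2) = 3/2 by norm_num]
      exact Jsq1 h
  have e2 : (∫ r in (0:ℝ)..R, r * (besselJ ((2 * ((2:ℕ) : ℝ) + 1) / 2) r) ^ 2)
      = ∫ r in (0:ℝ)..R, c2 r := by
    apply intervalIntegral.integral_congr
    intro r hr
    rw [uIcc_of_le hR0.le] at hr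
    rcases eq_or_lt_of_le hr.1 with h | h
    · simp [← h, hc2def]
    · rw [show ((2 * ((2:ℕ) : ℝ) + 1) / 2) = 5/2 by norm_num]
      exact Jsq2 h
  -- integrability
  have hic0 : IntervalIntegrable c0 volume 0 R := by
    apply Continuous.intervalIntegrable; rw [hc0def]; fun_prop
  have hil0 : IntervalIntegrable l0 volume 0 R := by
    apply Continuous.intervalIntegrable; rw [hl0def]; fun_prop
  have hiu1 : IntervalIntegrable u1 volume 0 R := by
    apply Continuous.intervalIntegrable; rw [hu1def]; fun_prop
  have hiu2 : IntervalIntegrable u2 volume 0 R := by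
    apply Continuous.intervalIntegrable; rw [hu2def]; fun_prop
  have hπ2 : (2:ℝ)/π ≤ 1 := by
    rw [div_le_one pi_pos]; linarith [pi_gt_three]
  -- pointwise bounds on Icc
  have hb1 : ∀ r ∈ Icc (0:ℝ) R, c1 r ≤ u1 r := by
    intro r hr
    rcases eq_or_lt_of_le hr.1 with h | h
    · simp [← h, hc1def, hu1def]
    · have h2 : r ≤ 2 := hr.2.trans hR2
      have hg0 := g_nonneg r h.le h2
      have hgle := g_le r h.le h2
      have key : ((sin r - r*cos r)/r) ^ 2 ≤ (r^2*(1/3 - r^2/30 + r^4/840))^2 := by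
        apply pow_le_pow_left₀ (by positivity)
        rw [div_le_iff₀ h]
        nlinarith
      simp only [hc1def, hu1def]
      have : (0:ℝ) < 2/π := by positivity
      nlinarith
  have hb2 : ∀ r ∈ Icc (0:ℝ) R, c2 r ≤ u2 r := by
    intro r hr
    rcases eq_or_lt_of_le hr.1 with h | h
    · simp [← h, hc2def, hu2def]
    · have h2 : r ≤ 2 := hr.2.trans hR2
      have hG0 := G_nonneg r h.le h2
      have hGle := G_le r h.le h2
      have key : (((3-r^2)*sin r - 3*r*cos r)/r^2) ^ 2 ≤ (r^3/15)^2 := by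
        apply pow_le_pow_left₀ (by positivity)
        rw [div_le_iff₀ (by positivity : (0:ℝ) < r^2)]
        nlinarith
      simp only [hc2def, hu2def]
      have : (0:ℝ) < 2/π := by positivity
      nlinarith
  have hb0 : ∀ r ∈ Icc (0:ℝ) R, l0 r ≤ c0 r := by
    intro r hr
    have h2 : r ≤ 2 := hr.2.trans hR2
    have hr0 : (0:ℝ) ≤ r := hr.1
    have hL := L1 r hr0 h2
    have h4 : r^2 ≤ 4 := by nlinarith [hr0]
    have h5 : r * r^2 ≤ r * 4 := mul_le_mul_of_nonneg_left h4 hr0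
    have h6 : r * r^2 = r^3 := by ring
    have hnn : 0 ≤ r - r^3/6 := by linarith
    have key : (r - r^3/6)^2 ≤ sin r ^ 2 := by
      apply pow_le_pow_left₀ hnn; linarith
    simp only [hl0def, hc0def]
    have : (0:ℝ) < 2/π := by positivity
    nlinarith
  -- integrability of c1, c2 by boundedness
  have hic1 : IntervalIntegrable c1 volume 0 R := by
    rw [intervalIntegrable_iff, uIoc_of_le hR0.le]
    apply MeasureTheory.Integrable.mono'
      (g := fun _ => (16:ℝ)/9) (integrableOn_const measure_Ioc_lt_top.ne)
    · apply Measurable.aestronglyMeasurable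
      apply Measurable.mul measurable_const
      exact ((Real.measurable_sin.sub (measurable_id.mul Real.measurable_cos)).div
        measurable_id).pow_const 2
    · rw [ae_restrict_iff' measurableSet_Ioc]
      filter_upwards with r hr
      have h0 : (0:ℝ) < r := hr.1
      have h2 : r ≤ 2 := hr.2.trans hR2
      have hg0 := g_nonneg r h0.le h2
      have hgle := g_le' r h0.le h2
      have key : ((sin r - r*cos r)/r) ^ 2 ≤ 16/9 := by
        have : (sin r - r*cos r)/r ≤ r^2/3 := by
          rw [div_le_iff₀ h0]; nlinarith
        have hd0 : 0 ≤ (sin r - r*cos r)/r := div_nonneg hg0 h0.le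
        have hcube : r^2 ≤ 4 := by nlinarith
        have hd1 : (sin r - r*cos r)/r ≤ 4/3 := by linarith
        nlinarith [mul_le_mul hd1 hd1 hd0 (by norm_num : (0:ℝ) ≤ 4/3)]
      rw [hc1def, Real.norm_eq_abs, abs_of_nonneg (by positivity)]
      nlinarith [sq_nonneg ((sin r - r*cos r)/r)]
  have hic2 : IntervalIntegrable c2 volume 0 R := by
    rw [intervalIntegrable_iff, uIoc_of_le hR0.le]
    apply MeasureTheory.Integrable.mono'
      (g := fun _ => (64:ℝ)/225) (integrableOn_const measure_Ioc_lt_top.ne)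
    · apply Measurable.aestronglyMeasurable
      apply Measurable.mul measurable_const
      apply Measurable.pow_const
      apply Measurable.div
      · exact ((measurable_const.sub (measurable_id.pow_const 2)).mul Real.measurable_sin).sub
          ((measurable_id.const_mul 3).mul Real.measurable_cos)
      · exact measurable_id.pow_const 2
    · rw [ae_restrict_iff' measurableSet_Ioc]
      filter_upwards with r hr
      have h0 : (0:ℝ) < r := hr.1
      have h2 : r ≤ 2 := hr.2.trans hR2
      have hG0 := G_nonneg r h0.le h2
      have hGle := G_le r h0.le h2
      have key : (((3-r^2)*sin r - 3*r*cos r)/r^2) ^ 2 ≤ 64/225 := by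
        have hr2 : (0:ℝ) < r^2 := by positivity
        have : ((3-r^2)*sin r - 3*r*cos r)/r^2 ≤ r^3/15 := by
          rw [div_le_iff₀ hr2]; nlinarith
        have hd0 : 0 ≤ ((3-r^2)*sin r - 3*r*cos r)/r^2 := div_nonneg hG0 hr2.le
        have hcube : r^3 ≤ 8 := by nlinarith [mul_pos h0 h0]
        have hd1 : ((3-r^2)*sin r - 3*r*cos r)/r^2 ≤ 8/15 := by linarith
        nlinarith [mul_le_mul hd1 hd1 hd0 (by norm_num : (0:ℝ) ≤ 8/15)]
      rw [hc2def, Real.norm_eq_abs, abs_of_nonneg (by positivity)]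
      nlinarith [sq_nonneg (((3-r^2)*sin r - 3*r*cos r)/r^2)]
  -- integral comparisons
  have A1 : (∫ r in (0:ℝ)..R, c1 r) ≤ ∫ r in (0:ℝ)..R, u1 r :=
    intervalIntegral.integral_mono_on hR0.le hic1 hiu1 hb1
  have A2 : (∫ r in (0:ℝ)..R, c2 r) ≤ ∫ r in (0:ℝ)..R, u2 r :=
    intervalIntegral.integral_mono_on hR0.le hic2 hiu2 hb2
  have A0 : (∫ r in (0:ℝ)..R, l0 r) ≤ ∫ r in (0:ℝ)..R, c0 r :=
    intervalIntegral.integral_mono_on hR0.le hil0 hic0 hb0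
  -- positivity of the polynomial difference integral
  have hD : 0 < ∫ r in (0:ℝ)..R, (2/3 * l0 r - u1 r - 2/3 * u2 r) := by
    apply intervalIntegral_pos_of_pos_on
    · apply Continuous.intervalIntegrable
      simp only [hl0def, hu1def, hu2def]; fun_prop
    · intro r hr
      have h0 : 0 < r := hr.1
      have h15 : r ≤ 1.575 := by linarith [hr.2]
      have hE := Epos r h0 h15
      simp only [hl0def, hu1def, hu2def]
      have hpig : (0:ℝ) < 2/π := by positivity
      nlinarith [mul_pos hpig (sub_pos.2 hE)]
    · exact hR0
  have hsplit : (∫ r in (0:ℝ)..R, (2/3 * l0 r - u1 r - 2/3 * u2 r))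
      = 2/3 * (∫ r in (0:ℝ)..R, l0 r) - (∫ r in (0:ℝ)..R, u1 r)
        - 2/3 * (∫ r in (0:ℝ)..R, u2 r) := by
    rw [intervalIntegral.integral_sub ((hil0.const_mul _).sub hiu1) (hiu2.const_mul _),
      intervalIntegral.integral_sub (hil0.const_mul _) hiu1,
      intervalIntegral.integral_const_mul, intervalIntegral.integral_const_mul,
      show (∫ x in (0:ℝ)..R, 2/3 * u2 x) = 2/3 * ∫ x in (0:ℝ)..R, u2 x from
        intervalIntegral.integral_const_mul _ _]
  -- combine
  have final : (∫ r in (0:ℝ)..R, c1 r) + 2/3 * (∫ r in (0:ℝ)..R, c2 r)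
      < 2/3 * ∫ r in (0:ℝ)..R, c0 r := by linarith
  simp only [Lambda3]
  push_cast at e0 e1 e2 ⊢
  rw [e0, e1, e2]
  nlinarith [mul_pos hCpos (sub_pos.2 final), hCpos]


/-- `h(R) = 2/3 − (2/3)R⁴/(16·36) − R²/16` satisfies `h(π/2) > 0`; `h` is (strictly)
decreasing on `[0,∞)`, `h(2) = 43/108 > 0`, hence `h > 0` on `[0,2]`; consequently
`(Λ_{3,0}(R) − Λ_{3,2}(R))·(2/3) > Λ_{3,1}(R)` for `0 < R ≤ π/2`. -/
theorem stmt_15 (h : ℝ → ℝ)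
    (hh : ∀ R, h R = 2 / 3 - 2 / 3 * R ^ 4 / (16 * 36) - R ^ 2 / 16) :
    0 < h (Real.pi / 2) ∧
    StrictAntiOn h (Set.Ici 0) ∧
    h 2 = 43 / 108 ∧ (0 : ℝ) < 43 / 108 ∧
    (∀ R : ℝ, 0 ≤ R → R ≤ 2 → 0 < h R) ∧
    (∀ R : ℝ, 0 < R → R ≤ Real.pi / 2 →
      Lambda3 1 R < (Lambda3 0 R - Lambda3 2 R) * (2 / 3)) := by
  have hpi1 : π < 3.15 := pi_lt_d2
  have hpi2 : 3 < π := pi_gt_three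
  refine ⟨?_, ?_, ?_, by norm_num, ?_, fun R hR0 hRpi => lambda_ineq hR0 hRpi⟩
  · rw [hh]
    have hsq : π^2 ≤ 9.9225 := by nlinarith
    have h4 : π^4 ≤ 98.46 := by
      nlinarith [mul_le_mul hsq hsq (sq_nonneg π) (by norm_num : (0:ℝ) ≤ 9.9225)]
    have e1 : (π/2)^4 = π^4/16 := by ring
    have e2 : (π/2)^2 = π^2/4 := by ring
    rw [e1, e2]
    nlinarith
  · intro a ha b hb hab
    simp only [Set.mem_Ici] at ha hb
    have h2 : a^2 < b^2 := by nlinarith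
    have h4 : a^4 < b^4 := by nlinarith [sq_nonneg a, sq_nonneg b]
    rw [hh, hh]
    nlinarith
  · rw [hh]; norm_num
  · intro R hR0 hR2
    rw [hh]
    have h2 : R^2 ≤ 4 := by nlinarith
    have h4 : R^4 ≤ 16 := by nlinarith [sq_nonneg R]
    nlinarith
end
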